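/- Let p₀ : ℝ → ℝ be a probability density (measurable, nonnegative, integrable, with ∫_ℝ p₀(x) dx = 1) satisfying ∫_ℝ x² p₀(x) dx < ∞, and let σ > 0. Define p_Y(y) = ∫_ℝ p₀(x) φ_σ(y − x) dx and ℓ(y) = ln p_Y(y). Then p_Y is everywhere positive and twice differentiable, and for every y ∈ ℝ, with posterior mean m(y) = y + σ² ℓ′(y), the second-order Tweedie identity holds: ∫_ℝ (x − m(y))² p₀(x) φ_σ(y − x) dx = p_Y(y) · (σ² + σ⁴ ℓ″(y)). Equivalently, the posterior variance of X given Y = y in the model Y = X + σN (N standard Gaussian independent of X ∼ p₀) equals σ² + σ⁴ (d²/dy²) ln p_Y(y). -/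

import Mathlib

open MeasureTheory Real

section aux
variable (σ : ℝ)

noncomputable def gaussC : ℝ := (Real.sqrt (2 * Real.pi * σ ^ 2))⁻¹

noncomputable def gauss (t : ℝ) : ℝ := gaussC σ * Real.exp (-t ^ 2 / (2 * σ ^ 2))

variable {σ}

lemma gaussC_pos (hσ : 0 < σ) : 0 < gaussC σ := by
  have : 0 < 2 * Real.pi * σ ^ 2 := by positivity
  simp [gaussC, Real.sqrt_pos.2 this]

lemma gauss_pos (hσ : 0 < σ) (t : ℝ) : 0 < gauss σ t :=
  mul_pos (gaussC_pos hσ) (Real.exp_pos _)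

lemma gauss_le (hσ : 0 < σ) (t : ℝ) : gauss σ t ≤ gaussC σ := by
  have h1 : Real.exp (-t ^ 2 / (2 * σ ^ 2)) ≤ 1 := by
    apply Real.exp_le_one_iff.2
    apply div_nonpos_of_nonpos_of_nonneg
    · simp [sq_nonneg]
    · positivity
  calc gauss σ t ≤ gaussC σ * 1 := by
        exact mul_le_mul_of_nonneg_left h1 (gaussC_pos hσ).le
    _ = gaussC σ := mul_one _

lemma sq_mul_gauss_le (hσ : 0 < σ) (t : ℝ) :
    t ^ 2 * gauss σ t ≤ gaussC σ * (2 * σ ^ 2) := by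
  set u : ℝ := t ^ 2 / (2 * σ ^ 2) with hu
  have h2σ : (0:ℝ) < 2 * σ ^ 2 := by positivity
  have hu0 : 0 ≤ u := by positivity
  have ht2 : t ^ 2 = 2 * σ ^ 2 * u := by rw [hu, mul_div_cancel₀ _ h2σ.ne']
  have hkey : u * Real.exp (-u) ≤ 1 := by
    rw [Real.exp_neg]
    rw [mul_inv_le_iff₀ (Real.exp_pos u), one_mul]
    linarith [Real.add_one_le_exp u]
  have : t ^ 2 * gauss σ t = gaussC σ * (2 * σ ^ 2) * (u * Real.exp (-u)) := by
    unfold gauss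
    have he : -t ^ 2 / (2 * σ ^ 2) = -u := by rw [hu]; ring
    rw [he, ht2]
    ring
  rw [this]
  have hc := (gaussC_pos hσ).le
  calc gaussC σ * (2 * σ ^ 2) * (u * Real.exp (-u)) ≤ gaussC σ * (2 * σ ^ 2) * 1 :=
        mul_le_mul_of_nonneg_left hkey (by positivity)
    _ = _ := mul_one _

lemma abs_mul_gauss_le (hσ : 0 < σ) (t : ℝ) :
    |t| * gauss σ t ≤ gaussC σ * (1 + 2 * σ ^ 2) / 2 := by
  have h1 : |t| ≤ (1 + t ^ 2) / 2 := by nlinarith [sq_nonneg (|t| - 1), sq_abs t]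
  have hg := (gauss_pos hσ t).le
  calc |t| * gauss σ t ≤ (1 + t ^ 2) / 2 * gauss σ t :=
        mul_le_mul_of_nonneg_right h1 hg
    _ = (gauss σ t + t ^ 2 * gauss σ t) / 2 := by ring
    _ ≤ (gaussC σ + gaussC σ * (2 * σ ^ 2)) / 2 := by
        have := gauss_le hσ t
        have := sq_mul_gauss_le hσ t
        linarith
    _ = gaussC σ * (1 + 2 * σ ^ 2) / 2 := by ring

lemma continuous_gauss : Continuous (gauss σ) := by
  unfold gauss
  fun_prop

lemma hasDerivAt_gauss (hσ : 0 < σ) (t : ℝ) :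
    HasDerivAt (gauss σ) (-(t / σ ^ 2) * gauss σ t) t := by
  have h1 : HasDerivAt (fun t : ℝ => -t ^ 2 / (2 * σ ^ 2)) (-(t / σ ^ 2)) t := by
    have := ((hasDerivAt_pow 2 t).neg).div_const (2 * σ ^ 2)
    refine this.congr_deriv ?_
    have : (σ:ℝ) ^ 2 ≠ 0 := by positivity
    norm_num
    field_simp
  have h2 := (h1.exp).const_mul (gaussC σ)
  refine h2.congr_deriv ?_
  unfold gauss
  ring

end aux

/-- (Second-order Tweedie identity.)  Let `p₀` be a probability density on
`ℝ` with finite second moment, `σ > 0`, `φ_σ` the centered Gaussian density with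
standard deviation `σ`, `p_Y(y) = ∫ p₀(x) φ_σ(y − x) dx` and `ℓ = ln p_Y`.  Then `p_Y`
is everywhere positive and twice differentiable, and with posterior mean
`m(y) = y + σ² ℓ′(y)`, the posterior variance of `X` given `Y = y` satisfies
`∫ (x − m(y))² p₀(x) φ_σ(y−x) dx = p_Y(y)·(σ² + σ⁴ ℓ″(y))` for every `y`. -/
theorem tweedie_second_order
    (p₀ : ℝ → ℝ) (hmeas : Measurable p₀) (hnonneg : ∀ x, 0 ≤ p₀ x)
    (hint : MeasureTheory.Integrable p₀)
    (hsum : ∫ x, p₀ x = 1)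
    (hmom2 : MeasureTheory.Integrable (fun x => x ^ 2 * p₀ x))
    (σ : ℝ) (hσ : 0 < σ) :
    let φ : ℝ → ℝ := fun t => (Real.sqrt (2 * Real.pi * σ ^ 2))⁻¹ *
      Real.exp (-t ^ 2 / (2 * σ ^ 2))
    let pY : ℝ → ℝ := fun y => ∫ x, p₀ x * φ (y - x)
    let ℓ : ℝ → ℝ := fun y => Real.log (pY y)
    (∀ y, 0 < pY y) ∧ Differentiable ℝ pY ∧ Differentiable ℝ (deriv pY) ∧
      ∀ y, ∫ x, (x - (y + σ ^ 2 * deriv ℓ y)) ^ 2 * p₀ x * φ (y - x) =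
        pY y * (σ ^ 2 + σ ^ 4 * deriv (deriv ℓ) y) := by
  intro φ pY ℓ
  have hφg : ∀ t, φ t = gauss σ t := fun t => rfl
  have hσ2 : (σ:ℝ) ^ 2 ≠ 0 := by positivity
  have hσ4 : (σ:ℝ) ^ 4 ≠ 0 := by positivity
  have hcpos := gaussC_pos hσ
  -- continuity helpers
  have hcont : ∀ y : ℝ, Continuous fun x : ℝ => φ (y - x) := fun y =>
    continuous_gauss.comp (continuous_const.sub continuous_id)
  have hcont1 : ∀ y : ℝ, Continuous fun x : ℝ => (x - y) / σ ^ 2 * φ (y - x) := fun y =>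
    ((continuous_id.sub continuous_const).div_const _).mul (hcont y)
  have hcont2 : ∀ y : ℝ, Continuous fun x : ℝ =>
      ((x - y) ^ 2 / σ ^ 4 - 1 / σ ^ 2) * φ (y - x) := fun y =>
    ((((continuous_id.sub continuous_const).pow 2).div_const _).sub continuous_const).mul (hcont y)
  -- integrability helper
  have key_int : ∀ g : ℝ → ℝ, Continuous g → (∃ C, ∀ x, |g x| ≤ C) →
      Integrable (fun x => p₀ x * g x) := by
    rintro g hg ⟨C, hC⟩
    have := hint.bdd_mul hg.aestronglyMeasurable
      (c := C) (Filter.Eventually.of_forall fun x => by simpa [Real.norm_eq_abs] using hC x)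
    simpa [mul_comm] using this
  -- uniform bounds
  have hbd0 : ∀ y x : ℝ, |φ (y - x)| ≤ gaussC σ := fun y x => by
    rw [hφg, abs_of_pos (gauss_pos hσ _)]; exact gauss_le hσ _
  have hbd1 : ∀ y x : ℝ, |(x - y) / σ ^ 2 * φ (y - x)| ≤
      gaussC σ * (1 + 2 * σ ^ 2) / 2 / σ ^ 2 := by
    intro y x
    rw [hφg]
    have h : |(x - y) / σ ^ 2 * gauss σ (y - x)| =
        |y - x| * gauss σ (y - x) / σ ^ 2 := by
      rw [abs_mul, abs_div, abs_of_pos (gauss_pos hσ _), abs_of_pos (by positivity : (0:ℝ) < σ ^ 2)]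
      rw [abs_sub_comm]
      ring
    rw [h]
    exact div_le_div_of_nonneg_right (abs_mul_gauss_le hσ _) (by positivity) |>.trans_eq rfl
  have hbd2 : ∀ y x : ℝ, |((x - y) ^ 2 / σ ^ 4 - 1 / σ ^ 2) * φ (y - x)| ≤
      3 * gaussC σ / σ ^ 2 := by
    intro y x
    rw [hφg]
    have hg := (gauss_pos hσ (y - x)).le
    have h1 : |((x - y) ^ 2 / σ ^ 4 - 1 / σ ^ 2) * gauss σ (y - x)| ≤
        ((x - y) ^ 2 / σ ^ 4 + 1 / σ ^ 2) * gauss σ (y - x) := by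
      rw [abs_mul, abs_of_nonneg hg]
      apply mul_le_mul_of_nonneg_right _ hg
      refine (abs_sub _ _).trans ?_
      rw [abs_of_nonneg (by positivity), abs_of_nonneg (by positivity)]
    refine h1.trans ?_
    have h2 : (x - y) ^ 2 * gauss σ (y - x) ≤ gaussC σ * (2 * σ ^ 2) := by
      have := sq_mul_gauss_le hσ (y - x)
      have hsq : (x - y) ^ 2 = (y - x) ^ 2 := by ring
      rw [hsq]; exact this
    have h3 : gauss σ (y - x) ≤ gaussC σ := gauss_le hσ _
    have hσ2pos : (0:ℝ) < σ ^ 2 := by positivity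
    have hσ4pos : (0:ℝ) < σ ^ 4 := by positivity
    have expand : ((x - y) ^ 2 / σ ^ 4 + 1 / σ ^ 2) * gauss σ (y - x)
        = (x - y) ^ 2 * gauss σ (y - x) / σ ^ 4 + gauss σ (y - x) / σ ^ 2 := by ring
    rw [expand]
    have e4 : (σ:ℝ) ^ 4 = σ ^ 2 * σ ^ 2 := by ring
    calc (x - y) ^ 2 * gauss σ (y - x) / σ ^ 4 + gauss σ (y - x) / σ ^ 2
        ≤ gaussC σ * (2 * σ ^ 2) / σ ^ 4 + gaussC σ / σ ^ 2 := by
          gcongr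
      _ = 3 * gaussC σ / σ ^ 2 := by
          rw [e4]; field_simp; ring
  -- integrability of the three integrands
  have hint0 : ∀ y : ℝ, Integrable (fun x => p₀ x * φ (y - x)) := fun y =>
    key_int _ (hcont y) ⟨_, hbd0 y⟩
  have hint1 : ∀ y : ℝ, Integrable (fun x => p₀ x * ((x - y) / σ ^ 2 * φ (y - x))) := fun y =>
    key_int _ (hcont1 y) ⟨_, hbd1 y⟩
  have hint2 : ∀ y : ℝ, Integrable
      (fun x => p₀ x * (((x - y) ^ 2 / σ ^ 4 - 1 / σ ^ 2) * φ (y - x))) := fun y =>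
    key_int _ (hcont2 y) ⟨_, hbd2 y⟩
  -- pointwise derivatives
  have hD1 : ∀ x y : ℝ, HasDerivAt (fun y => p₀ x * φ (y - x))
      (p₀ x * ((x - y) / σ ^ 2 * φ (y - x))) y := by
    intro x y
    have h1 : HasDerivAt (fun y : ℝ => y - x) 1 y := (hasDerivAt_id y).sub_const x
    have h2 := (hasDerivAt_gauss hσ (y - x)).comp y h1
    have h3 := h2.const_mul (p₀ x)
    refine h3.congr_deriv ?_
    simp only [hφg, Function.comp_apply]
    ring
  have hD2 : ∀ x y : ℝ, HasDerivAt (fun y => p₀ x * ((x - y) / σ ^ 2 * φ (y - x)))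
      (p₀ x * (((x - y) ^ 2 / σ ^ 4 - 1 / σ ^ 2) * φ (y - x))) y := by
    intro x y
    have h1 : HasDerivAt (fun y : ℝ => (x - y) / σ ^ 2) (-1 / σ ^ 2) y :=
      ((hasDerivAt_id y).const_sub x).div_const _
    have hg1 : HasDerivAt (fun y : ℝ => y - x) 1 y := (hasDerivAt_id y).sub_const x
    have hg2 := (hasDerivAt_gauss hσ (y - x)).comp y hg1
    have h2 := (h1.mul hg2).const_mul (p₀ x)
    refine h2.congr_deriv ?_
    simp only [hφg, Function.comp_apply]
    field_simp
    ring
  -- positivity of pY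
  have hpos : ∀ y, 0 < pY y := by
    intro y
    have hnn : (0 : ℝ → ℝ) ≤ fun x => p₀ x * φ (y - x) := fun x =>
      mul_nonneg (hnonneg x) (hφg (y - x) ▸ (gauss_pos hσ (y - x)).le)
    refine (integral_pos_iff_support_of_nonneg hnn (hint0 y)).2 ?_
    have hss : Function.support (fun x => p₀ x * φ (y - x)) = Function.support p₀ := by
      ext x
      simp only [Function.mem_support, mul_ne_zero_iff]
      exact ⟨fun h => h.1, fun h => ⟨h, (hφg (y - x) ▸ (gauss_pos hσ (y - x)).ne')⟩⟩
    rw [hss]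
    exact (integral_pos_iff_support_of_nonneg hnonneg hint).1 (by rw [hsum]; norm_num)
  -- first derivative of pY
  have hI1 : ∀ y : ℝ, HasDerivAt pY (∫ x, p₀ x * ((x - y) / σ ^ 2 * φ (y - x))) y := by
    intro y
    have h := hasDerivAt_integral_of_dominated_loc_of_deriv_le (μ := volume) (x₀ := y)
      (F := fun y x => p₀ x * φ (y - x))
      (F' := fun y x => p₀ x * ((x - y) / σ ^ 2 * φ (y - x)))
      (bound := fun x => gaussC σ * (1 + 2 * σ ^ 2) / 2 / σ ^ 2 * p₀ x)
      (Metric.ball_mem_nhds y one_pos)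
      (Filter.Eventually.of_forall fun y' => (hint0 y').aestronglyMeasurable)
      (hint0 y) ((hint1 y).aestronglyMeasurable)
      (Filter.Eventually.of_forall fun x y' _ => by
        rw [Real.norm_eq_abs, abs_mul, abs_of_nonneg (hnonneg x), mul_comm]
        exact mul_le_mul_of_nonneg_right (hbd1 y' x) (hnonneg x))
      (hint.const_mul _)
      (Filter.Eventually.of_forall fun x y' _ => hD1 x y')
    exact h.2
  have hdiff_pY : Differentiable ℝ pY := fun y => (hI1 y).differentiableAt
  have hderiv_pY : deriv pY = fun y => ∫ x, p₀ x * ((x - y) / σ ^ 2 * φ (y - x)) :=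
    funext fun y => (hI1 y).deriv
  -- second derivative
  have hI2 : ∀ y : ℝ, HasDerivAt (fun y => ∫ x, p₀ x * ((x - y) / σ ^ 2 * φ (y - x)))
      (∫ x, p₀ x * (((x - y) ^ 2 / σ ^ 4 - 1 / σ ^ 2) * φ (y - x))) y := by
    intro y
    have h := hasDerivAt_integral_of_dominated_loc_of_deriv_le (μ := volume) (x₀ := y)
      (F := fun y x => p₀ x * ((x - y) / σ ^ 2 * φ (y - x)))
      (F' := fun y x => p₀ x * (((x - y) ^ 2 / σ ^ 4 - 1 / σ ^ 2) * φ (y - x)))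
      (bound := fun x => 3 * gaussC σ / σ ^ 2 * p₀ x)
      (Metric.ball_mem_nhds y one_pos)
      (Filter.Eventually.of_forall fun y' => (hint1 y').aestronglyMeasurable)
      (hint1 y) ((hint2 y).aestronglyMeasurable)
      (Filter.Eventually.of_forall fun x y' _ => by
        rw [Real.norm_eq_abs, abs_mul, abs_of_nonneg (hnonneg x), mul_comm]
        exact mul_le_mul_of_nonneg_right (hbd2 y' x) (hnonneg x))
      (hint.const_mul _)
      (Filter.Eventually.of_forall fun x y' _ => hD2 x y')
    exact h.2
  have hdiff2 : Differentiable ℝ (deriv pY) := by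
    rw [hderiv_pY]
    exact fun y => (hI2 y).differentiableAt
  refine ⟨hpos, hdiff_pY, hdiff2, ?_⟩
  intro y
  -- derivative of ℓ
  have hL1 : ∀ z : ℝ, HasDerivAt ℓ
      ((∫ x, p₀ x * ((x - z) / σ ^ 2 * φ (z - x))) / pY z) z := fun z =>
    (hI1 z).log (hpos z).ne'
  have hdℓ : deriv ℓ = fun z => (∫ x, p₀ x * ((x - z) / σ ^ 2 * φ (z - x))) / pY z :=
    funext fun z => (hL1 z).deriv
  have hL2 : HasDerivAt (fun z => (∫ x, p₀ x * ((x - z) / σ ^ 2 * φ (z - x))) / pY z)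
      (((∫ x, p₀ x * (((x - y) ^ 2 / σ ^ 4 - 1 / σ ^ 2) * φ (y - x))) * pY y -
        (∫ x, p₀ x * ((x - y) / σ ^ 2 * φ (y - x))) *
          (∫ x, p₀ x * ((x - y) / σ ^ 2 * φ (y - x)))) / pY y ^ 2) y :=
    (hI2 y).div (hI1 y) (hpos y).ne'
  have ha : deriv ℓ y = (∫ x, p₀ x * ((x - y) / σ ^ 2 * φ (y - x))) / pY y := by
    rw [hdℓ]
  have hb : deriv (deriv ℓ) y =
      ((∫ x, p₀ x * (((x - y) ^ 2 / σ ^ 4 - 1 / σ ^ 2) * φ (y - x))) * pY y -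
        (∫ x, p₀ x * ((x - y) / σ ^ 2 * φ (y - x))) *
          (∫ x, p₀ x * ((x - y) / σ ^ 2 * φ (y - x)))) / pY y ^ 2 := by
    rw [hdℓ]
    exact hL2.deriv
  rw [ha, hb]
  set A := ∫ x, p₀ x * ((x - y) / σ ^ 2 * φ (y - x)) with hA
  set B := ∫ x, p₀ x * (((x - y) ^ 2 / σ ^ 4 - 1 / σ ^ 2) * φ (y - x)) with hB
  set P := pY y with hP
  have hP0 : P ≠ 0 := (hpos y).ne'
  have hPint : (∫ x, p₀ x * φ (y - x)) = P := rfl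
  have hpt : (fun x => (x - (y + σ ^ 2 * (A / P))) ^ 2 * p₀ x * φ (y - x))
      = fun x => σ ^ 4 * (p₀ x * (((x - y) ^ 2 / σ ^ 4 - 1 / σ ^ 2) * φ (y - x)))
        + -(2 * (σ ^ 2 * (A / P)) * σ ^ 2) * (p₀ x * ((x - y) / σ ^ 2 * φ (y - x)))
        + (σ ^ 2 + (σ ^ 2 * (A / P)) ^ 2) * (p₀ x * φ (y - x)) := by
    funext x
    field_simp
    ring
  rw [hpt]
  have i2 : Integrable
      (fun x => σ ^ 4 * (p₀ x * (((x - y) ^ 2 / σ ^ 4 - 1 / σ ^ 2) * φ (y - x)))) volume :=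
    (hint2 y).const_mul _
  have i1 : Integrable
      (fun x => -(2 * (σ ^ 2 * (A / P)) * σ ^ 2) * (p₀ x * ((x - y) / σ ^ 2 * φ (y - x))))
      volume := (hint1 y).const_mul _
  have i0 : Integrable
      (fun x => (σ ^ 2 + (σ ^ 2 * (A / P)) ^ 2) * (p₀ x * φ (y - x))) volume :=
    (hint0 y).const_mul _
  have i12 : Integrable
      (fun x => σ ^ 4 * (p₀ x * (((x - y) ^ 2 / σ ^ 4 - 1 / σ ^ 2) * φ (y - x)))
        + -(2 * (σ ^ 2 * (A / P)) * σ ^ 2) * (p₀ x * ((x - y) / σ ^ 2 * φ (y - x))))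
      volume := i2.add i1
  rw [integral_add i12 i0, integral_add i2 i1,
    integral_const_mul, integral_const_mul, integral_const_mul]
  rw [hPint, ← hA, ← hB]
  field_simp
  ring
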